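/- The arithmetic mean essentially dominates every symmetric e-merging function: if F is a symmetric e-merging function and e = (e₁,…,e_K) ∈ [0,∞)^K satisfies F(e) > 1, then F(e) ≤ (e₁+⋯+e_K)/K. Equivalently, there is no point e with F(e) > max((e₁+⋯+e_K)/K, 1). -/

import Mathlib

open MeasureTheory
open scoped ENNReal NNReal BigOperators

/-- An e-merging function: an increasing Borel function `F : [0,∞)^K → [0,∞)` such that
`E[F(E₁,…,E_K)] ≤ 1` whenever `E₁,…,E_K` are (arbitrarily dependent) nonnegative random
variables with expectation at most 1, on any probability space. -/
def IsEMerging (K : ℕ) (F : (Fin K → ℝ) → ℝ) : Prop :=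
  Monotone F ∧ Measurable F ∧ (∀ e, 0 ≤ F e) ∧
  ∀ (Ω : Type) [MeasurableSpace Ω] (Q : Measure Ω), IsProbabilityMeasure Q →
    ∀ E : Fin K → Ω → ℝ, (∀ k, Measurable (E k)) → (∀ k ω, 0 ≤ E k ω) →
      (∀ k, ∫⁻ ω, ENNReal.ofReal (E k ω) ∂Q ≤ 1) →
      ∫⁻ ω, ENNReal.ofReal (F (fun k => E k ω)) ∂Q ≤ 1

theorem key
    (K : ℕ) (hK : 2 ≤ K) (F : (Fin K → ℝ) → ℝ) (hF0 : ∀ e, 0 ≤ F e)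
    (hem : ∀ (Ω : Type) [MeasurableSpace Ω] (Q : Measure Ω), IsProbabilityMeasure Q →
    ∀ E : Fin K → Ω → ℝ, (∀ k, Measurable (E k)) → (∀ k ω, 0 ≤ E k ω) →
      (∀ k, ∫⁻ ω, ENNReal.ofReal (E k ω) ∂Q ≤ 1) →
      ∫⁻ ω, ENNReal.ofReal (F (fun k => E k ω)) ∂Q ≤ 1)
    (hsymm : ∀ (e : Fin K → ℝ) (σ : Equiv.Perm (Fin K)), F (e ∘ σ) = F e)
    (e : Fin K → ℝ) (he : ∀ k, 0 ≤ e k)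
    (p : ℝ) (hp0 : 0 ≤ p) (hp1 : p ≤ 1) (hpa : p * ((∑ k, e k) / K) ≤ 1) :
    p * F e ≤ 1 := by
  haveI : NeZero K := ⟨by omega⟩
  have hKpos : (0:ℝ) < K := by positivity
  letI : MeasurableSpace (Option (Fin K)) := ⊤
  set Q : Measure (Option (Fin K)) :=
    (ENNReal.ofReal (1 - p)) • Measure.dirac none
      + ∑ j : Fin K, (ENNReal.ofReal (p / K)) • Measure.dirac (some j) with hQ
  have hshift : ∀ k : Fin K, (∑ j : Fin K, e (k + j)) = ∑ i, e i := fun k =>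
    Fintype.sum_equiv (Equiv.addLeft k) _ _ (fun j => rfl)
  have hlint : ∀ f : Option (Fin K) → ℝ≥0∞,
      ∫⁻ ω, f ω ∂Q = ENNReal.ofReal (1 - p) * f none
        + ∑ j : Fin K, ENNReal.ofReal (p / K) * f (some j) := by
    intro f
    have hf : Measurable f := measurable_from_top
    rw [hQ, lintegral_add_measure, lintegral_smul_measure,
      lintegral_finset_sum_measure, lintegral_dirac' _ hf]
    congr 1
    refine Finset.sum_congr rfl fun j _ => ?_
    rw [lintegral_smul_measure, lintegral_dirac' _ hf, smul_eq_mul]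
  have hconst : ∀ c : ℝ≥0∞, ∑ _j : Fin K, ENNReal.ofReal (p / K) * c
      = ENNReal.ofReal p * c := by
    intro c
    rw [Finset.sum_const, Finset.card_univ, Fintype.card_fin, nsmul_eq_mul, ← mul_assoc]
    congr 1
    rw [← ENNReal.ofReal_natCast K, ← ENNReal.ofReal_mul (by positivity)]
    congr 1
    field_simp
  have hQprob : IsProbabilityMeasure Q := by
    constructor
    have h1 := hlint (fun _ => 1)
    simp only [lintegral_one] at h1
    rw [h1, hconst, mul_one, mul_one, ← ENNReal.ofReal_one,
      ← ENNReal.ofReal_add (by linarith) hp0]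
    norm_num
  -- random variables
  set E : Fin K → Option (Fin K) → ℝ :=
    fun k ω => Option.elim ω 0 (fun j => e (k + j)) with hE
  have hEmeas : ∀ k, Measurable (E k) := fun k => measurable_from_top
  have hEnn : ∀ k ω, 0 ≤ E k ω := by
    rintro k (_|j)
    · exact le_refl 0
    · exact he _
  have hEexp : ∀ k, ∫⁻ ω, ENNReal.ofReal (E k ω) ∂Q ≤ 1 := by
    intro k
    rw [hlint]
    simp only [hE, Option.elim]
    rw [ENNReal.ofReal_zero, mul_zero, zero_add]
    have : ∀ j : Fin K, ENNReal.ofReal (p / K) * ENNReal.ofReal (e (k + j))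
        = ENNReal.ofReal (p / K * e (k + j)) := fun j =>
      (ENNReal.ofReal_mul (div_nonneg hp0 hKpos.le)).symm
    rw [Finset.sum_congr rfl fun j _ => this j,
      ← ENNReal.ofReal_sum_of_nonneg (fun j _ => mul_nonneg (div_nonneg hp0 hKpos.le) (he _)),
      ← Finset.mul_sum, hshift]
    rw [← ENNReal.ofReal_one]
    apply ENNReal.ofReal_le_ofReal
    have heq : p / K * ∑ i, e i = p * ((∑ k, e k) / K) := by ring
    rw [heq]; exact hpa
  have hmain := hem _ Q hQprob E hEmeas hEnn hEexp
  rw [hlint] at hmain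
  have hval : ∀ j : Fin K, F (fun k => E k (some j)) = F e := by
    intro j
    have : (fun k => E k (some j)) = e ∘ (Equiv.addRight j) := by
      funext k
      simp [hE, Equiv.addRight]
    rw [this, hsymm]
  have hbound : ENNReal.ofReal (p * F e) ≤ 1 := by
    calc ENNReal.ofReal (p * F e)
        = ENNReal.ofReal p * ENNReal.ofReal (F e) := ENNReal.ofReal_mul hp0
      _ = ∑ j : Fin K, ENNReal.ofReal (p / K) * ENNReal.ofReal (F (fun k => E k (some j))) := by
          rw [Finset.sum_congr rfl fun j _ => by rw [hval j], hconst]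
      _ ≤ _ := le_add_self
      _ ≤ 1 := hmain
  rw [← ENNReal.ofReal_one] at hbound
  have := (ENNReal.ofReal_le_ofReal_iff (by norm_num)).mp hbound
  linarith


/-- The arithmetic mean essentially dominates every symmetric e-merging
function: if `F` is a symmetric e-merging function and `F(e) > 1` at a nonnegative
point `e`, then `F(e) ≤ (e₁+⋯+e_K)/K`. -/
theorem arithmetic_mean_essentially_dominates
    (K : ℕ) (hK : 2 ≤ K) (F : (Fin K → ℝ) → ℝ) (hF : IsEMerging K F)
    (hsymm : ∀ (e : Fin K → ℝ) (σ : Equiv.Perm (Fin K)), F (e ∘ σ) = F e) :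
    ∀ e : Fin K → ℝ, (∀ k, 0 ≤ e k) → 1 < F e → F e ≤ (∑ k, e k) / K := by
  intro e he hFe
  obtain ⟨hmono, hmeas, hF0, hem⟩ := hF
  set a : ℝ := (∑ k, e k) / K with ha
  have hKpos : (0:ℝ) < K := by positivity
  have ha0 : 0 ≤ a := by
    apply div_nonneg _ hKpos.le
    exact Finset.sum_nonneg fun k _ => he k
  rcases le_or_gt a 1 with h1 | h1
  · exfalso
    have := key K hK F hF0 hem hsymm e he 1 zero_le_one le_rfl (by rw [one_mul]; exact h1)
    linarith
  · have hinv : (0:ℝ) < 1 / a := by positivity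
    have := key K hK F hF0 hem hsymm e he (1/a) hinv.le
      (by rw [div_le_one (by linarith)]; linarith)
      (by rw [one_div, inv_mul_cancel₀ (by linarith)])
    rw [div_mul_eq_mul_div, one_mul, div_le_one (by linarith)] at this
    linarith
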